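/- arXiv:1902.01708 — 2 statements merged into one kernel-verified Lean document; each statement's English description precedes it below -/
import Mathlib

section
/- A commuting d-tuple S_𝐭 = (S_{1,t₁},…,S_{d,t_d}) of weighted translation operators with t₁,…,t_d > 0 possesses the wandering subspace property: the closed linear span of ⋃_{k ∈ ℕ^d} S_{1,t₁}^{k₁}⋯S_{d,t_d}^{k_d} E equals L²(ℝ₊), where E is the joint kernel of the adjoint tuple. -/
open MeasureTheory Set ContinuousLinearMap

noncomputable section

namespace WTS

/-- Lebesgue measure restricted to `ℝ₊ = [0, ∞)`. -/
def mu : Measure ℝ := volume.restrict (Set.Ici (0 : ℝ))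

/-- The complex Hilbert space `L²(ℝ₊)`. -/
abbrev H : Type := Lp ℂ 2 mu

/-- A symbol: a function `φ` that is continuous and positive on `ℝ₊ = [0, ∞)`. -/
structure IsSymbol (φ : ℝ → ℝ) : Prop where
  cont : ContinuousOn φ (Set.Ici 0)
  pos : ∀ x ∈ Set.Ici (0 : ℝ), 0 < φ x

/-- The weight function `φ_t(x) = √(φ(x)/φ(x−t))` for `x ≥ t`, and `0` for `x < t`. -/
def wt (φ : ℝ → ℝ) (t : ℝ) (x : ℝ) : ℝ :=
  if t ≤ x then Real.sqrt (φ x / φ (x - t)) else 0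

/-- `S` is the weighted translation operator with symbol `φ` and translation `t`:
`(S f)(x) = φ_t(x) f(x−t)` for `x ≥ t` and `0` for `x < t`, where `φ_t` is essentially
bounded. -/
structure IsWT (φ : ℝ → ℝ) (t : ℝ) (S : H →L[ℂ] H) : Prop where
  bdd : ∃ C : ℝ, ∀ᵐ x ∂mu, wt φ t x ≤ C
  eval : ∀ f : H, ∀ᵐ x ∂mu,
    (S f : ℝ → ℂ) x = if t ≤ x then (wt φ t x : ℂ) * (f : ℝ → ℂ) (x - t) else 0

/-- `φ_t` is essentially bounded below by a positive constant on `[t, ∞)`;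
this is precisely left invertibility of the weighted translation operator. -/
def LowerBdd (φ : ℝ → ℝ) (t : ℝ) : Prop :=
  ∃ c : ℝ, 0 < c ∧ ∀ᵐ x ∂mu, t ≤ x → c ≤ wt φ t x

/-- `T` is the Cauchy dual of the weighted translation operator with symbol `φ` and
translation `t`: `(T f)(x) = φ_t(x)⁻¹ f(x−t)` for `x ≥ t` and `0` for `x < t`. -/
def IsWTDual (φ : ℝ → ℝ) (t : ℝ) (T : H →L[ℂ] H) : Prop :=
  ∀ f : H, ∀ᵐ x ∂mu,
    (T f : ℝ → ℂ) x = if t ≤ x then ((wt φ t x : ℂ))⁻¹ * (f : ℝ → ℂ) (x - t) else 0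

/-- The ordered product `S₁^{k₁} ⋯ S_d^{k_d}` of powers of a `d`-tuple of operators. -/
def tuplePow {d : ℕ} (S : Fin d → (H →L[ℂ] H)) (k : Fin d → ℕ) : H →L[ℂ] H :=
  (List.ofFn fun i => S i ^ k i).prod

/-- The joint kernel `E = ⋂ᵢ ker Sᵢ*` of the adjoint tuple. -/
def jointKer {d : ℕ} (S : Fin d → (H →L[ℂ] H)) : Set H :=
  {f : H | ∀ i, ContinuousLinearMap.adjoint (S i) f = 0}

end WTS

namespace WTS

open scoped InnerProductSpace ComplexConjugate

/-! ### Auxiliary lemmas -/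

lemma mu_apply (A : Set ℝ) : mu A = volume (A ∩ Set.Ici 0) :=
  Measure.restrict_apply' measurableSet_Ici

lemma ae_shift {s : ℝ} (hs : 0 ≤ s) {P : ℝ → Prop} (h : ∀ᵐ y ∂mu, P y) :
    ∀ᵐ x ∂mu, s ≤ x → P (x - s) := by
  rw [ae_iff] at h ⊢
  have hsub : {x | ¬ (s ≤ x → P (x - s))} ∩ Set.Ici 0
      ⊆ (fun x => x + (-s)) ⁻¹' ({y | ¬ P y} ∩ Set.Ici 0) := by
    intro x hx
    simp only [Set.mem_inter_iff, Set.mem_setOf_eq, Classical.not_imp] at hx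
    obtain ⟨⟨hsx, hP⟩, _⟩ := hx
    refine ⟨by simpa [sub_eq_add_neg] using hP, ?_⟩
    simp only [Set.mem_preimage, Set.mem_Ici]
    linarith
  rw [mu_apply]
  refine le_antisymm ?_ zero_le
  calc volume ({x | ¬ (s ≤ x → P (x - s))} ∩ Set.Ici 0)
      ≤ volume ((fun x => x + (-s)) ⁻¹' ({y | ¬ P y} ∩ Set.Ici 0)) := measure_mono hsub
    _ = volume ({y | ¬ P y} ∩ Set.Ici 0) := measure_preimage_add_right _ _ _
    _ = mu {y | ¬ P y} := (mu_apply _).symm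
    _ = 0 := h

lemma ae_shift_up {s : ℝ} (hs : 0 ≤ s) {P : ℝ → Prop} (h : ∀ᵐ y ∂mu, P y) :
    ∀ᵐ x ∂mu, P (x + s) := by
  rw [ae_iff] at h ⊢
  have hsub : {x | ¬ P (x + s)} ∩ Set.Ici 0
      ⊆ (fun x => x + s) ⁻¹' ({y | ¬ P y} ∩ Set.Ici 0) := by
    intro x hx
    simp only [Set.mem_inter_iff, Set.mem_setOf_eq, Set.mem_preimage, Set.mem_Ici] at hx ⊢
    exact ⟨hx.1, by linarith [hx.2]⟩
  rw [mu_apply]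
  refine le_antisymm ?_ zero_le
  calc volume ({x | ¬ P (x + s)} ∩ Set.Ici 0)
      ≤ volume ((fun x => x + s) ⁻¹' ({y | ¬ P y} ∩ Set.Ici 0)) := measure_mono hsub
    _ = volume ({y | ¬ P y} ∩ Set.Ici 0) := measure_preimage_add_right _ _ _
    _ = mu {y | ¬ P y} := (mu_apply _).symm
    _ = 0 := h

lemma wt_nonneg (φ : ℝ → ℝ) (t x : ℝ) : 0 ≤ wt φ t x := by
  unfold wt; split
  · exact Real.sqrt_nonneg _
  · exact le_rfl

lemma wt_pos {φ : ℝ → ℝ} (hφ : IsSymbol φ) {t x : ℝ} (ht : 0 ≤ t) (hx : t ≤ x) :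
    0 < wt φ t x := by
  have hx0 : (0:ℝ) ≤ x := le_trans ht hx
  have h1 : 0 < φ x := hφ.pos x hx0
  have h2 : 0 < φ (x - t) := hφ.pos _ (by simp only [Set.mem_Ici]; linarith)
  unfold wt
  rw [if_pos hx]
  exact Real.sqrt_pos.2 (div_pos h1 h2)

lemma wt_one {φ : ℝ → ℝ} (hφ : IsSymbol φ) {x : ℝ} (hx : 0 ≤ x) : wt φ 0 x = 1 := by
  unfold wt
  rw [if_pos hx, sub_zero, div_self (hφ.pos x hx).ne', Real.sqrt_one]

lemma wt_mul {φ : ℝ → ℝ} (hφ : IsSymbol φ) {t s x : ℝ} (ht : 0 ≤ t) (hs : 0 ≤ s)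
    (hx : t + s ≤ x) : wt φ t x * wt φ s (x - t) = wt φ (t + s) x := by
  have hx0 : (0:ℝ) ≤ x := by linarith
  have hxt : t ≤ x := by linarith
  have hxts : s ≤ x - t := by linarith
  have h1 : 0 < φ x := hφ.pos x hx0
  have h2 : 0 < φ (x - t) := hφ.pos _ (by simp only [Set.mem_Ici]; linarith)
  unfold wt
  rw [if_pos hxt, if_pos hxts, if_pos hx, ← Real.sqrt_mul (by positivity)]
  congr 1
  have : x - t - s = x - (t + s) := by ring
  rw [this]
  field_simp

lemma wt_aesm {φ : ℝ → ℝ} (hφ : IsSymbol φ) {s : ℝ} (hs : 0 ≤ s) :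
    AEStronglyMeasurable (wt φ s) mu := by
  have hIci : Set.Ici s ⊆ Set.Ici (0:ℝ) := Set.Ici_subset_Ici.2 hs
  have hF : ContinuousOn (fun x => Real.sqrt (φ x / φ (x - s))) (Set.Ici s) := by
    apply Real.continuous_sqrt.comp_continuousOn
    apply ContinuousOn.div
    · exact hφ.cont.mono hIci
    · exact hφ.cont.comp (continuous_sub_right s).continuousOn
        (fun x hx => by simp only [Set.mem_Ici] at hx ⊢; linarith)
    · intro x hx
      simp only [Set.mem_Ici] at hx
      exact (hφ.pos (x - s) (by simp only [Set.mem_Ici]; linarith)).ne'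
  have hres : mu.restrict (Set.Ici s) = volume.restrict (Set.Ici s) := by
    rw [mu, Measure.restrict_restrict measurableSet_Ici, Set.inter_eq_left.2 hIci]
  have h1 : AEStronglyMeasurable (wt φ s) (mu.restrict (Set.Ici s)) := by
    rw [hres]
    refine (hF.aestronglyMeasurable measurableSet_Ici).congr ?_
    filter_upwards [ae_restrict_mem measurableSet_Ici] with x hx
    simp only [Set.mem_Ici] at hx
    unfold wt
    rw [if_pos hx]
  have h2 : AEStronglyMeasurable (wt φ s) (mu.restrict (Set.Ici s)ᶜ) := by
    refine AEStronglyMeasurable.congr (f := fun _ => (0:ℝ)) aestronglyMeasurable_const ?_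
    filter_upwards [ae_restrict_mem measurableSet_Ici.compl] with x hx
    simp only [Set.compl_Ici, Set.mem_Iio] at hx
    unfold wt
    exact (if_neg (not_le.2 hx)).symm
  have := aestronglyMeasurable_add_measure_iff.2 ⟨h1, h2⟩
  rwa [Measure.restrict_add_restrict_compl measurableSet_Ici] at this

lemma map_shift_mu {s : ℝ} (hs : 0 ≤ s) :
    Measure.map (fun x : ℝ => x + s) mu = volume.restrict (Set.Ici s) := by
  have hpre : (fun x : ℝ => x + s) ⁻¹' (Set.Ici s) = Set.Ici 0 := by
    ext x; simp [Set.mem_Ici]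
  rw [mu, ← hpre, ← Measure.restrict_map (measurable_add_const s) measurableSet_Ici,
    map_add_right_eq_self volume s]

lemma restrict_Ici_le {s : ℝ} (hs : 0 ≤ s) : volume.restrict (Set.Ici s) ≤ mu :=
  Measure.restrict_mono (Set.Ici_subset_Ici.2 hs) le_rfl

lemma memLp_shift {s : ℝ} (hs : 0 ≤ s) (h : H) :
    MemLp (fun y => (h : ℝ → ℂ) (y + s)) 2 mu := by
  have h1 : MemLp (h : ℝ → ℂ) 2 (volume.restrict (Set.Ici s)) :=
    (Lp.memLp h).mono_measure (restrict_Ici_le hs)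
  rw [← map_shift_mu hs] at h1
  exact (memLp_map_measure_iff h1.aestronglyMeasurable
    (measurable_add_const s).aemeasurable).1 h1

lemma aesm_shift_real {s : ℝ} (hs : 0 ≤ s) {g : ℝ → ℝ} (hg : AEStronglyMeasurable g mu) :
    AEStronglyMeasurable (fun y => g (y + s)) mu := by
  have h1 : AEStronglyMeasurable g (Measure.map (fun x : ℝ => x + s) mu) := by
    rw [map_shift_mu hs]; exact hg.mono_measure (restrict_Ici_le hs)
  exact h1.comp_aemeasurable (measurable_add_const s).aemeasurable

lemma pow_eval {φ : ℝ → ℝ} {t : ℝ} {S : H →L[ℂ] H} (hφ : IsSymbol φ) (ht : 0 < t)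
    (hS : IsWT φ t S) (n : ℕ) (f : H) :
    ∀ᵐ x ∂mu, ((S ^ n) f : ℝ → ℂ) x =
      if (n : ℝ) * t ≤ x then (wt φ ((n : ℝ) * t) x : ℂ) * (f : ℝ → ℂ) (x - n * t)
      else 0 := by
  induction n with
  | zero =>
    filter_upwards [ae_restrict_mem measurableSet_Ici] with x hx
    simp only [Set.mem_Ici] at hx
    rw [pow_zero, ContinuousLinearMap.one_apply]
    push_cast
    rw [if_pos (by linarith : (0:ℝ) * t ≤ x)]
    rw [zero_mul, wt_one hφ hx, sub_zero]
    simp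
  | succ n ih =>
    have heq : (S ^ (n + 1)) f = S ((S ^ n) f) := by
      rw [pow_succ']; rfl
    have h1 := hS.eval ((S ^ n) f)
    have h2 := ae_shift (le_of_lt ht) ih
    filter_upwards [h1, h2, ae_restrict_mem measurableSet_Ici] with x hx1 hx2 hx0
    simp only [Set.mem_Ici] at hx0
    rw [heq, hx1]
    push_cast
    by_cases hxt : t ≤ x
    · push_cast at hx2
      rw [if_pos hxt, hx2 hxt]
      by_cases hnt : (n : ℝ) * t ≤ x - t
      · rw [if_pos hnt]
        rw [if_pos (by linarith : ((n:ℝ)+1) * t ≤ x)]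
        have hw := wt_mul hφ (le_of_lt ht) (by positivity : (0:ℝ) ≤ (n:ℝ) * t)
          (by linarith : t + (n : ℝ) * t ≤ x)
        have harg : x - t - (n : ℝ) * t = x - ((n:ℝ)+1) * t := by ring
        have harg2 : t + (n : ℝ) * t = ((n:ℝ)+1) * t := by ring
        rw [harg, ← mul_assoc, ← Complex.ofReal_mul, hw, harg2]
      · rw [if_neg hnt, mul_zero, if_neg (by intro hc; apply hnt; linarith)]
    · rw [if_neg hxt, if_neg (by intro hc; apply hxt; nlinarith [Nat.cast_nonneg (α := ℝ) n])]

lemma pow_bdd {φ : ℝ → ℝ} {t : ℝ} {S : H →L[ℂ] H} (hφ : IsSymbol φ) (ht : 0 < t)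
    (hS : IsWT φ t S) (n : ℕ) :
    ∃ C : ℝ, 0 ≤ C ∧ ∀ᵐ x ∂mu, wt φ ((n : ℝ) * t) x ≤ C := by
  induction n with
  | zero =>
    refine ⟨1, zero_le_one, ?_⟩
    filter_upwards [ae_restrict_mem measurableSet_Ici] with x hx
    simp only [Set.mem_Ici] at hx
    push_cast
    rw [zero_mul, wt_one hφ hx]
  | succ n ih =>
    obtain ⟨C, hC⟩ := hS.bdd
    obtain ⟨C', hC'0, hC'⟩ := ih
    refine ⟨max C 0 * C', by positivity, ?_⟩
    have h2 := ae_shift (le_of_lt ht) hC'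
    filter_upwards [hC, h2, ae_restrict_mem measurableSet_Ici] with x hx1 hx2 hx0
    simp only [Set.mem_Ici] at hx0
    push_cast
    by_cases hcond : ((n:ℝ)+1) * t ≤ x
    · have hxt : t ≤ x := by nlinarith [Nat.cast_nonneg (α := ℝ) n]
      have hnt : (n : ℝ) * t ≤ x - t := by linarith
      have hw := wt_mul hφ (le_of_lt ht) (by positivity : (0:ℝ) ≤ (n:ℝ) * t)
        (by linarith : t + (n : ℝ) * t ≤ x)
      have harg2 : t + (n : ℝ) * t = ((n:ℝ)+1) * t := by ring
      rw [harg2] at hw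
      rw [← hw]
      have h3 : wt φ t x ≤ max C 0 := le_trans hx1 (le_max_left _ _)
      have h4 : wt φ ((n:ℝ) * t) (x - t) ≤ C' := hx2 hxt
      exact mul_le_mul h3 h4 (wt_nonneg _ _ _) (le_max_right _ _)
    · unfold wt
      rw [if_neg hcond]
      positivity

lemma list_ofFn_prod_eq {M : Type*} [Monoid M] :
    ∀ {d : ℕ} (f : Fin d → M) (i₀ : Fin d), (∀ j, j ≠ i₀ → f j = 1) →
      (List.ofFn f).prod = f i₀ := by
  intro d
  induction d with
  | zero => exact fun f i₀ _ => i₀.elim0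
  | succ n ih =>
    intro f i₀ hf
    rw [List.ofFn_succ, List.prod_cons]
    rcases Fin.eq_zero_or_eq_succ i₀ with h0 | ⟨j₀, hj₀⟩
    · subst h0
      have : (List.ofFn fun i : Fin n => f i.succ).prod = 1 := by
        apply List.prod_eq_one
        intro x hx
        rw [List.mem_ofFn] at hx
        obtain ⟨i, rfl⟩ := hx
        exact hf _ (Fin.succ_ne_zero i)
      rw [this, mul_one]
    · subst hj₀
      rw [hf 0 (Fin.succ_ne_zero j₀).symm, one_mul]
      exact ih _ j₀ fun j hj => hf j.succ (fun hc => hj (Fin.succ_injective _ hc))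

/-- a commuting `d`-tuple of weighted translation operators possesses the
wandering subspace property: the closed linear span of `⋃_{k ∈ ℕ^d} S_𝐭^k E` is all of
`L²(ℝ₊)`, where `E` is the joint kernel of the adjoint tuple. -/
theorem statement_10 {d : ℕ} (φ : Fin d → ℝ → ℝ) (t : Fin d → ℝ)
    (S : Fin d → (H →L[ℂ] H))
    (hφ : ∀ i, IsSymbol (φ i)) (ht : ∀ i, 0 < t i)
    (hS : ∀ i, IsWT (φ i) (t i) (S i))
    (hcomm : ∀ i j, S i * S j = S j * S i) :
    (Submodule.span ℂ
        (⋃ k : Fin d → ℕ, ⇑(tuplePow S k) '' jointKer S)).topologicalClosure = ⊤ := by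
  rw [Submodule.topologicalClosure_eq_top_iff, Submodule.eq_bot_iff]
  intro h hh
  rcases Nat.eq_zero_or_pos d with hd | hd
  · subst hd
    have h1 : h ∈ jointKer S := fun i => i.elim0
    have h2 : tuplePow S (fun i => i.elim0) = 1 := by
      unfold tuplePow
      simp [List.ofFn_zero]
    have hmem : h ∈ (⋃ k : Fin 0 → ℕ, ⇑(tuplePow S k) '' jointKer S) := by
      refine Set.mem_iUnion.2 ⟨fun i => i.elim0, ⟨h, h1, ?_⟩⟩
      rw [h2]
      rfl
    have := (Submodule.mem_orthogonal _ h).1 hh h (Submodule.subset_span hmem)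
    exact inner_self_eq_zero.1 this
  · obtain ⟨i₀, hi₀⟩ : ∃ i₀ : Fin d, ∀ i, t i₀ ≤ t i := by
      have : Nonempty (Fin d) := ⟨⟨0, hd⟩⟩
      exact Finite.exists_min t
    set m := t i₀ with hm
    have hm0 : 0 < m := ht i₀
    have hSm := hS i₀
    have hφm := hφ i₀
    -- For every n, h vanishes a.e. on [n m, n m + m).
    have key : ∀ n : ℕ, ∀ᵐ x ∂mu,
        ((n:ℝ) * m ≤ x ∧ x < (n:ℝ) * m + m) → (h : ℝ → ℂ) x = 0 := by
      intro n
      set w : ℝ → ℝ := wt (φ i₀) ((n:ℝ) * m) with hwdef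
      have hnm0 : (0:ℝ) ≤ (n:ℝ) * m := by positivity
      obtain ⟨C, hC0, hC⟩ := pow_bdd hφm hm0 hSm n
      set G : ℝ → ℂ := fun y =>
        if 0 ≤ y ∧ y < m then (w (y + n * m) : ℂ) * (h : ℝ → ℂ) (y + n * m) else 0
        with hGdef
      -- G is in L².
      have hwa : AEStronglyMeasurable (fun y => w (y + n * m)) mu :=
        aesm_shift_real hnm0 (wt_aesm hφm hnm0)
      have hprod : AEStronglyMeasurable
          (fun y => (w (y + n * m) : ℂ) * (h : ℝ → ℂ) (y + n * m)) mu :=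
        (Complex.continuous_ofReal.comp_aestronglyMeasurable hwa).mul
          (memLp_shift hnm0 h).aestronglyMeasurable
      have hGaesm : AEStronglyMeasurable G mu := by
        have : G = Set.indicator (Set.Ico (0:ℝ) m)
            (fun y => (w (y + n * m) : ℂ) * (h : ℝ → ℂ) (y + n * m)) := by
          funext y
          rw [Set.indicator_apply]
          simp only [Set.mem_Ico, hGdef]
        rw [this]
        exact hprod.indicator measurableSet_Ico
      have hGmem : MemLp G 2 mu := by
        refine MemLp.mono' (g := fun y => C * ‖(h : ℝ → ℂ) (y + n * m)‖)
          (((memLp_shift hnm0 h).norm).const_mul C) hGaesm ?_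
        filter_upwards [ae_shift_up hnm0 hC] with y hy
        by_cases hcond : 0 ≤ y ∧ y < m
        · have hGy : G y = (w (y + n * m) : ℂ) * (h : ℝ → ℂ) (y + n * m) := if_pos hcond
          rw [hGy, norm_mul, Complex.norm_real, Real.norm_of_nonneg (wt_nonneg _ _ _)]
          exact mul_le_mul_of_nonneg_right hy (norm_nonneg _)
        · have hGy : G y = 0 := if_neg hcond
          rw [hGy, norm_zero]
          positivity
      set g : H := hGmem.toLp G with hgdef
      have hgG : (g : ℝ → ℂ) =ᵐ[mu] G := hGmem.coeFn_toLp
      -- g belongs to the joint kernel.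
      have hgker : g ∈ jointKer S := by
        intro i
        apply ext_inner_right ℂ
        intro v
        rw [ContinuousLinearMap.adjoint_inner_left, inner_zero_left]
        rw [MeasureTheory.L2.inner_def]
        apply integral_eq_zero_of_ae
        filter_upwards [(hS i).eval v, hgG] with x hx1 hx2
        by_cases hxt : t i ≤ x
        · have hxm : ¬ (0 ≤ x ∧ x < m) := by
            push_neg
            intro _
            exact le_trans (hi₀ i) hxt
          have hGx : G x = 0 := if_neg hxm
          rw [hx2, hGx]
          exact inner_zero_left _
        · show inner ℂ _ ((S i v : ℝ → ℂ) x) = 0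
          rw [hx1, if_neg hxt]
          exact inner_zero_right _
      -- `tuplePow` with a single nonzero exponent.
      have htp : tuplePow S (fun j => if j = i₀ then n else 0) = S i₀ ^ n := by
        unfold tuplePow
        exact (list_ofFn_prod_eq (fun i => S i ^ (if i = i₀ then n else 0)) i₀
          (fun j hj => by show S j ^ (if j = i₀ then n else 0) = 1; rw [if_neg hj, pow_zero])).trans
          (by show S i₀ ^ (if i₀ = i₀ then n else 0) = _; rw [if_pos rfl])
      -- orthogonality
      have horth : (inner ℂ ((S i₀ ^ n) g) h : ℂ) = 0 := by
        rw [← htp]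
        exact (Submodule.mem_orthogonal _ h).1 hh _ (Submodule.subset_span
          (Set.mem_iUnion.2 ⟨_, Set.mem_image_of_mem _ hgker⟩))
      -- translate into a real integral
      set r : ℝ → ℝ := fun x => if ((n:ℝ) * m ≤ x ∧ x < (n:ℝ) * m + m)
        then (w x) ^ 2 * Complex.normSq ((h : ℝ → ℂ) x) else 0 with hrdef
      have hae : (fun x => (inner ℂ (((S i₀ ^ n) g : ℝ → ℂ) x) ((h : ℝ → ℂ) x) : ℂ))
          =ᵐ[mu] fun x => (r x : ℂ) := by
        filter_upwards [pow_eval hφm hm0 hSm n g, ae_shift hnm0 hgG,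
          ae_restrict_mem measurableSet_Ici] with x hx1 hx2 hx0
        simp only [Set.mem_Ici] at hx0
        rw [hx1]
        by_cases hc : (n:ℝ) * m ≤ x
        · rw [if_pos hc, hx2 hc]
          have harg : x - (n:ℝ) * m + (n:ℝ) * m = x := by ring
          by_cases hlt : x < (n:ℝ) * m + m
          · have hGx : G (x - (n:ℝ) * m) = (w (x - (n:ℝ) * m + (n:ℝ) * m) : ℂ) *
                (h : ℝ → ℂ) (x - (n:ℝ) * m + (n:ℝ) * m) :=
              if_pos ⟨by linarith, by linarith⟩
            have hrx : r x = (w x) ^ 2 * Complex.normSq ((h : ℝ → ℂ) x) :=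
              if_pos ⟨hc, hlt⟩
            rw [hGx, harg, hrx, RCLike.inner_apply]
            simp only [map_mul, Complex.conj_ofReal, Complex.ofReal_mul, Complex.ofReal_pow,
              Complex.normSq_eq_conj_mul_self]
            ring
          · have hGx : G (x - (n:ℝ) * m) = 0 :=
              if_neg (by push_neg; intro _; linarith)
            have hrx : r x = 0 := if_neg (by push_neg; intro _; linarith)
            rw [hGx, mul_zero, hrx]
            simp [inner_zero_left]
        · have hrx : r x = 0 := if_neg (by push_neg; intro hcc; exact absurd hcc hc)
          rw [if_neg hc, hrx]
          simp [inner_zero_left]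
      have hzero : ∫ x, (r x : ℂ) ∂mu = 0 := by
        rw [← integral_congr_ae hae, ← MeasureTheory.L2.inner_def]
        exact horth
      have hrintC : Integrable (fun x => (r x : ℂ)) mu :=
        (MeasureTheory.L2.integrable_inner ((S i₀ ^ n) g) h).congr hae
      have hr0 : ∫ x, r x ∂mu = 0 := by
        have h1 : ∫ x, RCLike.re ((r x : ℂ)) ∂mu = RCLike.re (∫ x, (r x : ℂ) ∂mu) :=
          integral_re hrintC
        rw [hzero] at h1
        simpa [RCLike.re_to_complex, Complex.ofReal_re] using h1
      have hrint : Integrable r mu := by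
        have := hrintC.re
        simpa using this
      have hrnn : 0 ≤ᵐ[mu] r := Filter.Eventually.of_forall fun x => by
        show (0:ℝ) ≤ if ((n:ℝ) * m ≤ x ∧ x < (n:ℝ) * m + m)
          then (w x) ^ 2 * Complex.normSq ((h : ℝ → ℂ) x) else 0
        split
        · exact mul_nonneg (sq_nonneg _) (Complex.normSq_nonneg _)
        · exact le_rfl
      have hr_ae0 : r =ᵐ[mu] 0 := (integral_eq_zero_iff_of_nonneg_ae hrnn hrint).1 hr0
      filter_upwards [hr_ae0] with x hx hcond
      have hrx : r x = (w x) ^ 2 * Complex.normSq ((h : ℝ → ℂ) x) := if_pos hcond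
      rw [hrx] at hx
      simp only [Pi.zero_apply] at hx
      have hwpos : 0 < w x := wt_pos hφm hnm0 hcond.1
      have : Complex.normSq ((h : ℝ → ℂ) x) = 0 := by
        have h2 : (w x) ^ 2 ≠ 0 := by positivity
        exact (mul_eq_zero.1 hx).resolve_left h2
      exact Complex.normSq_eq_zero.1 this
    -- combine over all n
    have hall : (h : ℝ → ℂ) =ᵐ[mu] 0 := by
      filter_upwards [ae_all_iff.2 key, ae_restrict_mem measurableSet_Ici] with x hx hx0
      simp only [Set.mem_Ici] at hx0
      set n : ℕ := ⌊x / m⌋₊ with hn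
      refine hx n ⟨?_, ?_⟩
      · have := Nat.floor_le (div_nonneg hx0 hm0.le)
        calc (n:ℝ) * m ≤ (x / m) * m := by nlinarith
          _ = x := by field_simp
      · have := Nat.lt_floor_add_one (x / m)
        have hx2 : x / m < (n:ℝ) + 1 := this
        nlinarith [(div_lt_iff₀ hm0).1 hx2]
    exact Lp.eq_zero_iff_ae_eq_zero.2 hall

end WTS
end
end

section
/- Let S_𝐭 = (S_{1,t₁},…,S_{d,t_d}) be a toral left invertible commuting d-tuple of weighted translation operators with t₁,…,t_d > 0, let S_𝐭' be its toral Cauchy dual tuple, let E be the joint kernel of S_𝐭^*, and let P be the orthogonal projection of L²(ℝ₊) onto E. If f ∈ L²(ℝ₊) satisfies P (S_𝐭'^* )^k f = P S_{1,t₁}'^{*k₁}⋯S_{d,t_d}'^{*k_d} f = 0 for all k = (k₁,…,k_d) ∈ ℕ^d, then f = 0. -/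
open MeasureTheory Set ContinuousLinearMap

noncomputable section

namespace WTS

/-! ### Auxiliary lemmas -/

lemma mu_ae_nonneg : ∀ᵐ x ∂mu, (0:ℝ) ≤ x := ae_restrict_mem measurableSet_Ici

lemma ae_mu_of_ae {p : ℝ → Prop} (h : ∀ᵐ x ∂(volume : Measure ℝ), p x) :
    ∀ᵐ x ∂mu, p x := ae_restrict_of_ae h

lemma restrict_Ici_le_s18 {t : ℝ} (ht : 0 ≤ t) :
    (volume : Measure ℝ).restrict (Set.Ici t) ≤ mu :=
  Measure.restrict_mono (Set.Ici_subset_Ici.2 ht) le_rfl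

lemma shift_mp (t : ℝ) :
    MeasurePreserving (fun x => x + t) mu ((volume : Measure ℝ).restrict (Set.Ici t)) := by
  have h := (measurePreserving_add_right (volume : Measure ℝ) t).restrict_preimage
      (s := Set.Ici t) measurableSet_Ici
  have he : (· + t) ⁻¹' (Set.Ici t) = Set.Ici (0:ℝ) := by
    ext x; simp [Set.mem_Ici, le_add_iff_nonneg_left]
  rw [he] at h; exact h

lemma translate_ae {t : ℝ} (ht : 0 ≤ t) {p : ℝ → Prop} (h : ∀ᵐ x ∂mu, p x) :
    ∀ᵐ x ∂mu, p (x + t) :=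
  (shift_mp t).quasiMeasurePreserving.ae
    (h.filter_mono (ae_mono (restrict_Ici_le_s18 ht)))

lemma memLp_shift_s18 (f : H) {t : ℝ} (ht : 0 ≤ t) :
    MemLp (fun x => (f : ℝ → ℂ) (x + t)) 2 mu :=
  ((Lp.memLp f).mono_measure (restrict_Ici_le_s18 ht)).comp_measurePreserving (shift_mp t)

lemma wt_shift_eq {φ : ℝ → ℝ} {t x : ℝ} (hx : 0 ≤ x) :
    wt φ t (x + t) = Real.sqrt (φ (x + t) / φ x) := by
  rw [wt, if_pos (le_add_iff_nonneg_left t |>.2 hx), add_sub_cancel_right]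

lemma wt_shift_pos {φ : ℝ → ℝ} (hφ : IsSymbol φ) {t x : ℝ} (ht : 0 ≤ t) (hx : 0 ≤ x) :
    0 < wt φ t (x + t) := by
  rw [wt_shift_eq hx]
  exact Real.sqrt_pos.2 (div_pos (hφ.pos _ (Set.mem_Ici.2 (add_nonneg hx ht)))
    (hφ.pos _ (Set.mem_Ici.2 hx)))

lemma aemeasurable_wt_shift {φ : ℝ → ℝ} (hφ : IsSymbol φ) {t : ℝ} (ht : 0 ≤ t) :
    AEMeasurable (fun x => wt φ t (x + t)) mu := by
  have hψc : Continuous (fun x => φ (max x 0)) :=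
    hφ.cont.comp_continuous (continuous_id.max continuous_const) (fun x => le_max_right x 0)
  have hW : Continuous fun x => Real.sqrt (φ (max (x + t) 0) / φ (max x 0)) :=
    ((hψc.comp (continuous_id.add continuous_const)).div hψc
      (fun x => (hφ.pos _ (Set.mem_Ici.2 (le_max_right x 0))).ne')).sqrt
  refine hW.measurable.aemeasurable.congr ?_
  filter_upwards [mu_ae_nonneg] with x hx
  rw [wt_shift_eq hx, max_eq_left (add_nonneg hx ht), max_eq_left hx]

/-- The adjoint of the Cauchy dual acts as a weighted backward translation. -/
lemma adjoint_dual_eval {φ : ℝ → ℝ} {t : ℝ} {T : H →L[ℂ] H}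
    (hφ : IsSymbol φ) (ht : 0 < t) (hlb : LowerBdd φ t) (hT : IsWTDual φ t T)
    (h : H) :
    (ContinuousLinearMap.adjoint T h : ℝ → ℂ) =ᵐ[mu]
      fun x => ((wt φ t (x + t) : ℝ) : ℂ)⁻¹ * (h : ℝ → ℂ) (x + t) := by
  obtain ⟨c, hc, hcb⟩ := hlb
  have hvb : ∀ᵐ x ∂mu, c ≤ wt φ t (x + t) := by
    filter_upwards [translate_ae ht.le hcb, mu_ae_nonneg] with x h1 h2
    exact h1 ((le_add_iff_nonneg_left t).2 h2)
  have hmeas : AEStronglyMeasurable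
      (fun x => ((wt φ t (x + t) : ℝ) : ℂ)⁻¹ * (h : ℝ → ℂ) (x + t)) mu := by
    refine (AEMeasurable.mul ?_ ?_).aestronglyMeasurable
    · exact ((Complex.measurable_ofReal.comp_aemeasurable
        (aemeasurable_wt_shift hφ ht.le))).inv
    · exact (memLp_shift_s18 h ht.le).aestronglyMeasurable.aemeasurable
  have hk : MemLp (fun x => ((wt φ t (x + t) : ℝ) : ℂ)⁻¹ * (h : ℝ → ℂ) (x + t)) 2 mu := by
    refine MemLp.of_le_mul (c := c⁻¹) (memLp_shift_s18 h ht.le) hmeas ?_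
    filter_upwards [hvb] with x hx
    rw [norm_mul]
    gcongr
    rw [← Complex.ofReal_inv, Complex.norm_real, Real.norm_eq_abs,
      abs_of_nonneg (inv_nonneg.2 (hc.le.trans hx))]
    exact inv_anti₀ hc hx
  set k : H := hk.toLp _ with hkdef
  have hkc : (k : ℝ → ℂ) =ᵐ[mu]
      fun x => ((wt φ t (x + t) : ℝ) : ℂ)⁻¹ * (h : ℝ → ℂ) (x + t) := hk.coeFn_toLp
  suffices hsuff : ContinuousLinearMap.adjoint T h = k by
    rw [hsuff]; exact hkc
  have key : ∀ g : H, (inner ℂ g (ContinuousLinearMap.adjoint T h) : ℂ) = inner ℂ g k := by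
    intro g
    rw [ContinuousLinearMap.adjoint_inner_right]
    rw [MeasureTheory.L2.inner_def, MeasureTheory.L2.inner_def]
    set F : ℝ → ℂ := fun x =>
      if t ≤ x then ((wt φ t x : ℝ) : ℂ)⁻¹ * (starRingEnd ℂ) ((g : ℝ → ℂ) (x - t))
        * (h : ℝ → ℂ) x else 0 with hF
    have hTg := hT g
    have e1 : (fun x => (inner ℂ ((T g : ℝ → ℂ) x) ((h : ℝ → ℂ) x) : ℂ)) =ᵐ[mu] F := by
      filter_upwards [hTg] with x hx
      rw [RCLike.inner_apply, hx, hF]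
      by_cases hxt : t ≤ x
      · simp only [if_pos hxt]
        rw [map_mul, map_inv₀, Complex.conj_ofReal]
        ring
      · simp [if_neg hxt]
    rw [integral_congr_ae e1]
    have hFm : AEStronglyMeasurable F mu := by
      refine AEStronglyMeasurable.congr ?_ e1
      exact (Lp.aestronglyMeasurable (T g)).inner (Lp.aestronglyMeasurable h)
    have e2 : ∫ x, F x ∂mu = ∫ x, F x ∂((volume : Measure ℝ).restrict (Set.Ici t)) := by
      have hind : F = (Set.Ici t).indicator F := by
        funext x
        by_cases hxt : t ≤ x
        · rw [Set.indicator_of_mem (Set.mem_Ici.2 hxt)]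
        · rw [Set.indicator_of_notMem (by simpa [Set.mem_Ici] using hxt), hF]
          simp [if_neg hxt]
      conv_lhs => rw [hind]
      rw [integral_indicator measurableSet_Ici]
      show ∫ x in Set.Ici t, F x ∂((volume : Measure ℝ).restrict (Set.Ici 0)) = _
      rw [Measure.restrict_restrict measurableSet_Ici,
        Set.inter_eq_self_of_subset_left (Set.Ici_subset_Ici.2 ht.le)]
    rw [e2]
    have hmap : Measure.map (fun x => x + t) mu = (volume : Measure ℝ).restrict (Set.Ici t) :=
      (shift_mp t).map_eq
    have e3 : ∫ x, F x ∂((volume : Measure ℝ).restrict (Set.Ici t))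
        = ∫ x, F (x + t) ∂mu := by
      rw [← hmap]
      exact integral_map (measurable_add_const t).aemeasurable
        (hmap ▸ hFm.mono_measure (restrict_Ici_le_s18 ht.le))
    rw [e3]
    refine integral_congr_ae ?_
    filter_upwards [hkc, mu_ae_nonneg] with x hkx hx
    rw [hF]
    simp only [if_pos ((le_add_iff_nonneg_left t).2 hx), add_sub_cancel_right]
    rw [RCLike.inner_apply, hkx]
    ring
  have hzero : (inner ℂ (ContinuousLinearMap.adjoint T h - k)
      (ContinuousLinearMap.adjoint T h - k) : ℂ) = 0 := by
    rw [inner_sub_right, key, sub_self]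
  exact sub_eq_zero.mp (inner_self_eq_zero.mp hzero)

/-- If `h` is orthogonal to the joint kernel, then `h` vanishes a.e. on `[0, τ)`,
where `τ` is a common lower bound for the translations. -/
lemma ae_zero_on_Iio {d : ℕ} {φ : Fin d → ℝ → ℝ} {t : Fin d → ℝ} {S : Fin d → (H →L[ℂ] H)}
    (hS : ∀ i, IsWT (φ i) (t i) (S i)) {τ : ℝ} (hτ : ∀ i, τ ≤ t i)
    (h : H) (hperp : ∀ g ∈ jointKer S, (inner ℂ h g : ℂ) = 0) :
    ∀ᵐ x ∂mu, x < τ → (h : ℝ → ℂ) x = 0 := by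
  have hg : MemLp ((Set.Iio τ).indicator ((h : ℝ → ℂ))) 2 mu :=
    (Lp.memLp h).indicator measurableSet_Iio
  set g : H := hg.toLp _ with hgdef
  have hgc : (g : ℝ → ℂ) =ᵐ[mu] (Set.Iio τ).indicator ((h : ℝ → ℂ)) := hg.coeFn_toLp
  have hgker : g ∈ jointKer S := by
    intro i
    have h1 : (inner ℂ (ContinuousLinearMap.adjoint (S i) g)
        (ContinuousLinearMap.adjoint (S i) g) : ℂ)
        = inner ℂ g ((S i) (ContinuousLinearMap.adjoint (S i) g)) := by
      rw [ContinuousLinearMap.adjoint_inner_left]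
    have h2 : (inner ℂ g ((S i) (ContinuousLinearMap.adjoint (S i) g)) : ℂ) = 0 := by
      rw [MeasureTheory.L2.inner_def]
      rw [show (0:ℂ) = ∫ _x, (0:ℂ) ∂mu by simp]
      refine integral_congr_ae ?_
      filter_upwards [hgc, (hS i).eval (ContinuousLinearMap.adjoint (S i) g)] with x hgx hsx
      rw [RCLike.inner_apply, hgx, hsx]
      by_cases hxt : t i ≤ x
      · rw [Set.indicator_of_notMem
          (by simp only [Set.mem_Iio, not_lt]; exact le_trans (hτ i) hxt)]
        simp
      · rw [if_neg hxt, zero_mul]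
    exact inner_self_eq_zero.mp (h1.trans h2)
  have hp := hperp g hgker
  have h3 : (inner ℂ g g : ℂ) = inner ℂ h g := by
    rw [MeasureTheory.L2.inner_def, MeasureTheory.L2.inner_def]
    refine integral_congr_ae ?_
    filter_upwards [hgc] with x hgx
    rw [RCLike.inner_apply, RCLike.inner_apply, hgx]
    by_cases hxτ : x < τ
    · rw [Set.indicator_of_mem (Set.mem_Iio.2 hxτ)]
    · rw [Set.indicator_of_notMem (by simpa using hxτ)]
      simp
  have hg0 : g = 0 := inner_self_eq_zero.mp (h3.trans hp)
  have hz : (g : ℝ → ℂ) =ᵐ[mu] 0 := by rw [hg0]; exact Lp.coeFn_zero _ _ _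
  filter_upwards [hgc.symm.trans hz] with x hx hxτ
  rw [Set.indicator_of_mem (Set.mem_Iio.2 hxτ)] at hx
  exact hx

lemma ofFn_prod_eq {M : Type*} [Monoid M] :
    ∀ {d : ℕ} (g : Fin d → M) (i₀ : Fin d), (∀ j, j ≠ i₀ → g j = 1) →
      (List.ofFn g).prod = g i₀ := by
  intro d
  induction d with
  | zero => exact fun _ i₀ _ => i₀.elim0
  | succ n ih =>
    intro g i₀ hg
    rw [List.ofFn_succ, List.prod_cons]
    rcases Fin.eq_zero_or_eq_succ i₀ with h0 | ⟨j, hj⟩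
    · subst h0
      have hone : (List.ofFn fun i : Fin n => g i.succ).prod = 1 := by
        refine List.prod_eq_one ?_
        intro x hx
        obtain ⟨i, rfl⟩ := List.mem_ofFn.mp hx
        exact hg i.succ (Fin.succ_ne_zero i)
      rw [hone, mul_one]
    · subst hj
      rw [hg 0 (Fin.succ_ne_zero j).symm, one_mul]
      exact ih (fun i => g i.succ) j
        (fun i hi => hg i.succ (fun hc => hi (Fin.succ_injective n hc)))

lemma tuplePow_single {d : ℕ} (T : Fin d → (H →L[ℂ] H)) (i₀ : Fin d) (m : ℕ) :
    tuplePow T (Pi.single i₀ m) = T i₀ ^ m := by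
  rw [tuplePow]
  have := ofFn_prod_eq (fun i => T i ^ (Pi.single i₀ m : Fin d → ℕ) i) i₀
    (fun j hj => by
      show T j ^ (Pi.single i₀ m : Fin d → ℕ) j = 1
      rw [Pi.single_eq_of_ne hj, pow_zero])
  rw [this]
  show T i₀ ^ (Pi.single i₀ m : Fin d → ℕ) i₀ = T i₀ ^ m
  rw [Pi.single_eq_same]

/-- let `P` be the orthogonal projection of `L²(ℝ₊)` onto the joint kernel
`E` of `S_𝐭*` (characterized by `P f ∈ E` and `f − P f ⟂ E` for every `f`). If
`P S_{1,t₁}'^{*k₁} ⋯ S_{d,t_d}'^{*k_d} f = 0` for all `k ∈ ℕ^d`, then `f = 0`. -/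
theorem statement_18 {d : ℕ} (φ : Fin d → ℝ → ℝ) (t : Fin d → ℝ)
    (S S' : Fin d → (H →L[ℂ] H))
    (hφ : ∀ i, IsSymbol (φ i)) (ht : ∀ i, 0 < t i)
    (hS : ∀ i, IsWT (φ i) (t i) (S i))
    (hcomm : ∀ i j, S i * S j = S j * S i)
    (hlb : ∀ i, LowerBdd (φ i) (t i))
    (hS' : ∀ i, IsWTDual (φ i) (t i) (S' i))
    (P : H →L[ℂ] H)
    (hP : ∀ f : H, P f ∈ jointKer S ∧
      ∀ g ∈ jointKer S, (inner ℂ (f - P f) g : ℂ) = 0) :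
    ∀ f : H,
      (∀ k : Fin d → ℕ,
        P (tuplePow (fun i => ContinuousLinearMap.adjoint (S' i)) k f) = 0) →
      f = 0 := by
  intro f hf
  rcases Nat.eq_zero_or_pos d with hd | hd
  · -- trivial case `d = 0`: the joint kernel is everything
    subst hd
    have h0 : tuplePow (fun i => ContinuousLinearMap.adjoint (S' i)) (fun i => i.elim0) = 1 := by
      rw [tuplePow]
      simp
    have hPf : P f = 0 := by
      have := hf (fun i => i.elim0)
      rwa [h0, ContinuousLinearMap.one_apply] at this
    have hmem : f ∈ jointKer S := fun i => i.elim0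
    have hz := (hP f).2 f hmem
    rw [hPf, sub_zero] at hz
    exact inner_self_eq_zero.mp hz
  · -- main case
    obtain ⟨i₀, hi₀⟩ : ∃ i₀ : Fin d, ∀ i, t i₀ ≤ t i := by
      obtain ⟨i₀, -, hmin⟩ := Finset.exists_min_image Finset.univ t ⟨⟨0, hd⟩, Finset.mem_univ _⟩
      exact ⟨i₀, fun i => hmin i (Finset.mem_univ i)⟩
    set τ : ℝ := t i₀ with hτdef
    have hτ : 0 < τ := ht i₀
    set A : H →L[ℂ] H := ContinuousLinearMap.adjoint (S' i₀) with hA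
    -- the hypothesis yields `P (A ^ m f) = 0`
    have hC : ∀ m : ℕ, P ((A ^ m) f) = 0 := by
      intro m
      have := hf (Pi.single i₀ m)
      rwa [tuplePow_single (fun i => ContinuousLinearMap.adjoint (S' i)) i₀ m] at this
    -- powers of `A` act as weighted backward translations
    have hB : ∀ m : ℕ, ∃ c : ℝ → ℂ,
        (∀ᵐ x ∂mu, ((A ^ m) f : ℝ → ℂ) x = c x * (f : ℝ → ℂ) (x + m * τ) ∧ c x ≠ 0) := by
      intro m
      induction m with
      | zero =>
        refine ⟨fun _ => 1, ?_⟩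
        filter_upwards with x
        simp
      | succ m ihm =>
        obtain ⟨c, hc⟩ := ihm
        refine ⟨fun x => ((wt (φ i₀) τ (x + τ) : ℝ) : ℂ)⁻¹ * c (x + τ), ?_⟩
        have hAe := adjoint_dual_eval (hφ i₀) (ht i₀) (hlb i₀) (hS' i₀) ((A ^ m) f)
        have hpow : (A ^ (m + 1)) f = A ((A ^ m) f) := by
          rw [pow_succ']
          rfl
        have hct := translate_ae hτ.le hc
        filter_upwards [hpow ▸ hAe, hct, mu_ae_nonneg] with x hx1 hx2 hx3
        constructor
        · rw [hx1, hx2.1, ← mul_assoc]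
          congr 2
          push_cast
          ring
        · exact mul_ne_zero
            (inv_ne_zero (Complex.ofReal_ne_zero.mpr
              (wt_shift_pos (hφ i₀) hτ.le hx3).ne'))
            hx2.2
    -- hence `f` vanishes a.e. on each `[mτ, (m+1)τ)`
    have hE : ∀ m : ℕ, ∀ᵐ x ∂mu, x < τ → (f : ℝ → ℂ) (x + m * τ) = 0 := by
      intro m
      obtain ⟨c, hc⟩ := hB m
      have hperp : ∀ g ∈ jointKer S, (inner ℂ ((A ^ m) f) g : ℂ) = 0 := by
        intro g hg
        have := (hP ((A ^ m) f)).2 g hg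
        rwa [hC m, sub_zero] at this
      have hz := ae_zero_on_Iio hS (fun i => hi₀ i) ((A ^ m) f) hperp
      filter_upwards [hc, hz] with x hx1 hx2 hxτ
      have := hx2 hxτ
      rw [hx1.1] at this
      exact (mul_eq_zero.mp this).resolve_left hx1.2
    -- transfer to the whole line and conclude
    have key : ∀ m : ℕ, ∀ᵐ x ∂(volume : Measure ℝ),
        0 ≤ x - m * τ → x - m * τ < τ → (f : ℝ → ℂ) x = 0 := by
      intro m
      have h1 : ∀ᵐ x ∂(volume : Measure ℝ),
          x ∈ Set.Ici (0:ℝ) → x < τ → (f : ℝ → ℂ) (x + m * τ) = 0 :=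
        (ae_restrict_iff' measurableSet_Ici).mp (hE m)
      have h2 := (measurePreserving_add_right (volume : Measure ℝ)
        (-(m * τ))).quasiMeasurePreserving.ae h1
      filter_upwards [h2] with x hx h0 h1'
      have := hx (by simpa [sub_eq_add_neg] using h0) (by simpa [sub_eq_add_neg] using h1')
      simpa [sub_eq_add_neg, add_assoc] using this
    have hall : ∀ᵐ x ∂mu, ∀ m : ℕ,
        0 ≤ x - m * τ → x - m * τ < τ → (f : ℝ → ℂ) x = 0 :=
      ae_mu_of_ae (ae_all_iff.2 key)
    have hfz : (f : ℝ → ℂ) =ᵐ[mu] 0 := by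
      filter_upwards [hall, mu_ae_nonneg] with x hx hx0
      have h1 : ((⌊x / τ⌋₊ : ℝ)) * τ ≤ x := by
        rw [← le_div_iff₀ hτ]
        exact Nat.floor_le (div_nonneg hx0 hτ.le)
      have h2 : x < ((⌊x / τ⌋₊ : ℝ) + 1) * τ := by
        rw [← div_lt_iff₀ hτ]
        exact Nat.lt_floor_add_one _
      have := hx ⌊x / τ⌋₊ (by linarith) (by nlinarith)
      simpa using this
    exact Lp.eq_zero_iff_ae_eq_zero.mpr hfz

end WTS
end
end
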